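/- For k ∈ (0,1), the complete elliptic integrals satisfy √(1−k²)·K(k) < E(k) < ((1+√(1−k²))/2)² · K(k). -/

import Mathlib

open Real

/-- The complete elliptic integral of the first kind. -/
noncomputable def ellipticK (k : ℝ) : ℝ :=
  ∫ θ in (0:ℝ)..(π / 2), 1 / Real.sqrt (1 - k ^ 2 * Real.sin θ ^ 2)

/-- The complete elliptic integral of the second kind. -/
noncomputable def ellipticE (k : ℝ) : ℝ :=
  ∫ θ in (0:ℝ)..(π / 2), Real.sqrt (1 - k ^ 2 * Real.sin θ ^ 2)

open intervalIntegral MeasureTheory Set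

set_option maxHeartbeats 1600000

namespace EllAux

lemma rad_pos {k : ℝ} (hk2 : k ^ 2 < 1) (θ : ℝ) : 0 < 1 - k ^ 2 * Real.sin θ ^ 2 := by
  nlinarith [Real.sin_sq_le_one θ, sq_nonneg k, sq_nonneg (Real.sin θ), sq_nonneg (k * Real.sin θ)]

lemma sqrt_rad_pos {k : ℝ} (hk2 : k ^ 2 < 1) (θ : ℝ) :
    0 < Real.sqrt (1 - k ^ 2 * Real.sin θ ^ 2) :=
  Real.sqrt_pos.mpr (rad_pos hk2 θ)

lemma contDelta (k : ℝ) : Continuous (fun θ : ℝ => Real.sqrt (1 - k ^ 2 * Real.sin θ ^ 2)) := by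
  continuity

lemma contInv {k : ℝ} (hk2 : k ^ 2 < 1) :
    Continuous (fun θ : ℝ => 1 / Real.sqrt (1 - k ^ 2 * Real.sin θ ^ 2)) :=
  continuous_const.div (contDelta k) (fun θ => (sqrt_rad_pos hk2 θ).ne')

lemma K_pos {k : ℝ} (hk2 : k ^ 2 < 1) : 0 < ellipticK k := by
  apply intervalIntegral_pos_of_pos ((contInv hk2).intervalIntegrable _ _)
  · intro x
    exact div_pos one_pos (sqrt_rad_pos hk2 x)
  · positivity

/-- Lower bound: √(1-k²) K(k) < E(k). -/
lemma lower {k : ℝ} (hk : k ∈ Set.Ioo (0:ℝ) 1) :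
    Real.sqrt (1 - k ^ 2) * ellipticK k < ellipticE k := by
  obtain ⟨hk0, hk1⟩ := hk
  have hk2 : k ^ 2 < 1 := by nlinarith
  set q := Real.sqrt (1 - k ^ 2) with hqdef
  have hq0 : 0 < q := Real.sqrt_pos.mpr (by nlinarith)
  have hq2 : q ^ 2 = 1 - k ^ 2 := Real.sq_sqrt (by nlinarith)
  set f : ℝ → ℝ := fun θ => Real.sqrt (1 - k ^ 2 * Real.sin θ ^ 2)
      - q * (1 / Real.sqrt (1 - k ^ 2 * Real.sin θ ^ 2)) with hfdef
  have hfc : Continuous f := (contDelta k).sub (continuous_const.mul (contInv hk2))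
  have hfc2 : Continuous fun θ => f (π / 2 - θ) := hfc.comp (by continuity)
  have hint : ∫ θ in (0:ℝ)..(π/2), f θ = ellipticE k - q * ellipticK k := by
    rw [hfdef]
    rw [intervalIntegral.integral_sub (g := fun θ => q * (1 / Real.sqrt (1 - k ^ 2 * Real.sin θ ^ 2))) ((contDelta k).intervalIntegrable _ _)
      ((continuous_const.mul (contInv hk2)).intervalIntegrable _ _),
      intervalIntegral.integral_const_mul]
    rfl
  have hrefl : ∫ θ in (0:ℝ)..(π/2), f (π/2 - θ) = ∫ θ in (0:ℝ)..(π/2), f θ := by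
    simpa using intervalIntegral.integral_comp_sub_left f (π/2)
  have hsplit : ∫ θ in (0:ℝ)..(π/2), (f θ + f (π/2 - θ))
      = (∫ θ in (0:ℝ)..(π/2), f θ) + ∫ θ in (0:ℝ)..(π/2), f (π/2 - θ) :=
    intervalIntegral.integral_add (hfc.intervalIntegrable _ _) (hfc2.intervalIntegrable _ _)
  have hpos : 0 < ∫ θ in (0:ℝ)..(π/2), (f θ + f (π/2 - θ)) := by
    apply intervalIntegral_pos_of_pos_on ((hfc.add hfc2).intervalIntegrable _ _) _ (by positivity)
    intro x hx
    have hs : 0 < Real.sin x := Real.sin_pos_of_pos_of_lt_pi hx.1 (by linarith [hx.2, Real.pi_pos])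
    have hc : 0 < Real.cos x := Real.cos_pos_of_mem_Ioo ⟨by linarith [hx.1, Real.pi_pos], hx.2⟩
    have hcrad : 0 < 1 - k ^ 2 * Real.cos x ^ 2 := by
      nlinarith [Real.cos_sq_le_one x, sq_nonneg k, sq_nonneg (Real.cos x), sq_nonneg (k * Real.cos x)]
    set a := Real.sqrt (1 - k ^ 2 * Real.sin x ^ 2) with hadef
    set b := Real.sqrt (1 - k ^ 2 * Real.cos x ^ 2) with hbdef
    have ha0 : 0 < a := sqrt_rad_pos hk2 x
    have hb0 : 0 < b := Real.sqrt_pos.mpr hcrad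
    have ha2 : a ^ 2 = 1 - k ^ 2 * Real.sin x ^ 2 := Real.sq_sqrt (rad_pos hk2 x).le
    have hb2 : b ^ 2 = 1 - k ^ 2 * Real.cos x ^ 2 := Real.sq_sqrt hcrad.le
    have habsq : q ^ 2 < (a * b) ^ 2 := by
      rw [mul_pow, ha2, hb2, hq2]
      nlinarith [Real.sin_sq_add_cos_sq x,
        mul_pos (mul_pos (pow_pos hk0 2) (pow_pos hs 2)) (mul_pos (pow_pos hk0 2) (pow_pos hc 2))]
    have hab : q < a * b := lt_of_pow_lt_pow_left₀ 2 (mul_pos ha0 hb0).le habsq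
    have h1 : q * (1 / a) < b := by
      rw [mul_one_div, div_lt_iff₀ ha0]
      linarith [hab, mul_comm a b]
    have h2 : q * (1 / b) < a := by
      rw [mul_one_div, div_lt_iff₀ hb0]
      linarith [hab]
    have hfx : f x = a - q * (1 / a) := by rw [hfdef]
    have hfy : f (π/2 - x) = b - q * (1 / b) := by
      simp only [hfdef, Real.sin_pi_div_two_sub, hbdef]
    show 0 < f x + f (π/2 - x)
    rw [hfx, hfy]
    linarith
  rw [hsplit, hrefl, hint] at hpos
  linarith

/-- Key auxiliary inequality: E(m) < (1-m²/2) K(m). -/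
lemma Elt {m : ℝ} (hm : m ∈ Set.Ioo (0:ℝ) 1) :
    ellipticE m < (1 - m ^ 2 / 2) * ellipticK m := by
  obtain ⟨hm0, hm1⟩ := hm
  have hm2 : m ^ 2 < 1 := by nlinarith
  have hrad := rad_pos hm2
  have hs0 := sqrt_rad_pos hm2
  set Δ : ℝ → ℝ := fun θ => Real.sqrt (1 - m ^ 2 * Real.sin θ ^ 2) with hΔ
  set D : ℝ → ℝ := fun θ => (Real.cos θ ^ 2 - Real.sin θ ^ 2) / Δ θ
      + m ^ 2 * Real.sin θ ^ 2 * Real.cos θ ^ 2 / Δ θ ^ 3 with hD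
  have hd2 : ∀ θ, Δ θ ^ 2 = 1 - m ^ 2 * Real.sin θ ^ 2 := fun θ => Real.sq_sqrt (hrad θ).le
  have hasD : ∀ θ, HasDerivAt (fun t => Real.sin t * Real.cos t / Δ t) (D θ) θ := by
    intro θ
    have h1 : HasDerivAt (fun t => Real.sin t * Real.cos t)
        (Real.cos θ * Real.cos θ + Real.sin θ * -Real.sin θ) θ :=
      (Real.hasDerivAt_sin θ).mul (Real.hasDerivAt_cos θ)
    have h2 : HasDerivAt (fun t => 1 - m ^ 2 * Real.sin t ^ 2)
        (-(m ^ 2 * (2 * Real.sin θ ^ 1 * Real.cos θ))) θ := by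
      simpa using (((Real.hasDerivAt_sin θ).pow 2).const_mul (m^2)).const_sub (1:ℝ)
    have h3 : HasDerivAt Δ (-(m ^ 2 * (2 * Real.sin θ ^ 1 * Real.cos θ)) / (2 * Δ θ)) θ :=
      h2.sqrt (hrad θ).ne'
    have h4 := h1.div h3 (hs0 θ).ne'
    refine h4.congr_deriv (Eq.symm ?_)
    have h0 : Δ θ ≠ 0 := (hs0 θ).ne'
    rw [hD]
    field_simp
    ring
  have hcontD : Continuous D := by
    apply Continuous.add
    · exact (Continuous.sub (by continuity) (by continuity)).div (contDelta m)
        (fun θ => (hs0 θ).ne')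
    · exact Continuous.div (by continuity) ((contDelta m).pow 3)
        (fun θ => pow_ne_zero 3 (hs0 θ).ne')
  have hftc : ∫ θ in (0:ℝ)..(π/2), D θ = 0 := by
    rw [intervalIntegral.integral_eq_sub_of_hasDerivAt (fun θ _ => hasD θ)
      (hcontD.intervalIntegrable _ _)]
    simp
  set R : ℝ → ℝ := fun θ => m ^ 4 / 2 * (Real.sin θ ^ 2 * Real.cos θ ^ 2 / Δ θ ^ 3) with hR
  have hcontR : Continuous R := by
    apply Continuous.mul continuous_const
    exact Continuous.div (by continuity) ((contDelta m).pow 3)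
      (fun θ => pow_ne_zero 3 (hs0 θ).ne')
  have hpoint : ∀ θ, (1 - m ^ 2 / 2) * (1 / Δ θ) - Δ θ = -(m ^ 2 / 2) * D θ + R θ := by
    intro θ
    have hd := hd2 θ
    have hp := Real.sin_sq_add_cos_sq θ
    have h0 : Δ θ ≠ 0 := (hs0 θ).ne'
    rw [hD, hR]
    field_simp
    ring_nf
    linear_combination (-2 * Δ θ ^ 2) * hd + (m ^ 2 * Δ θ ^ 2) * hp
  have hint1 : ∫ θ in (0:ℝ)..(π/2), ((1 - m ^ 2 / 2) * (1 / Δ θ) - Δ θ)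
      = (1 - m ^ 2 / 2) * ellipticK m - ellipticE m := by
    rw [intervalIntegral.integral_sub (f := fun θ => (1 - m ^ 2 / 2) * (1 / Δ θ)) ((continuous_const.mul (contInv hm2)).intervalIntegrable _ _)
      ((contDelta m).intervalIntegrable _ _), intervalIntegral.integral_const_mul]
    rfl
  have hint2 : ∫ θ in (0:ℝ)..(π/2), ((1 - m ^ 2 / 2) * (1 / Δ θ) - Δ θ)
      = ∫ θ in (0:ℝ)..(π/2), (-(m ^ 2 / 2) * D θ + R θ) :=
    intervalIntegral.integral_congr (fun θ _ => hpoint θ)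
  have hint3 : ∫ θ in (0:ℝ)..(π/2), (-(m ^ 2 / 2) * D θ + R θ)
      = -(m ^ 2 / 2) * (∫ θ in (0:ℝ)..(π/2), D θ) + ∫ θ in (0:ℝ)..(π/2), R θ := by
    rw [intervalIntegral.integral_add (f := fun θ => -(m ^ 2 / 2) * D θ) ((continuous_const.mul hcontD).intervalIntegrable _ _)
      (hcontR.intervalIntegrable _ _), intervalIntegral.integral_const_mul]
  have hRpos : 0 < ∫ θ in (0:ℝ)..(π/2), R θ := by
    apply intervalIntegral_pos_of_pos_on (hcontR.intervalIntegrable _ _) _ (by positivity)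
    intro x hx
    have hs : 0 < Real.sin x := Real.sin_pos_of_pos_of_lt_pi hx.1 (by linarith [hx.2, Real.pi_pos])
    have hc : 0 < Real.cos x := Real.cos_pos_of_mem_Ioo ⟨by linarith [hx.1, Real.pi_pos], hx.2⟩
    rw [hR]
    have := hs0 x
    positivity
  have := hint1 ▸ (hint2.trans hint3)
  rw [hftc] at this
  linarith [hRpos, this]

/-- Change of variables for the Gauss/Landen transformation. -/
lemma gauss_subst {m : ℝ} (hm : m ∈ Set.Ioo (0:ℝ) 1) {g : ℝ → ℝ} (hg : Continuous g) :
    (∫ θ in (0:ℝ)..(π/2),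
      g (Real.arcsin ((1 + m) * Real.sin θ / (1 + m * Real.sin θ ^ 2)))
        * ((1 + m) * (1 - m * Real.sin θ ^ 2)
            / ((1 + m * Real.sin θ ^ 2) * Real.sqrt (1 - m ^ 2 * Real.sin θ ^ 2))))
      = ∫ φ in (0:ℝ)..(π/2), g φ := by
  obtain ⟨hm0, hm1⟩ := hm
  have hm2 : m ^ 2 < 1 := by nlinarith
  have hpi : (0:ℝ) < π/2 := by positivity
  have hden : ∀ θ : ℝ, 0 < 1 + m * Real.sin θ ^ 2 := fun θ => by
    nlinarith [sq_nonneg (Real.sin θ)]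
  have hnum : ∀ θ : ℝ, 0 < 1 - m * Real.sin θ ^ 2 := fun θ => by
    nlinarith [Real.sin_sq_le_one θ]
  set u : ℝ → ℝ := fun θ => (1 + m) * Real.sin θ / (1 + m * Real.sin θ ^ 2) with hu
  set f : ℝ → ℝ := fun θ => Real.arcsin (u θ) with hf
  set F' : ℝ → ℝ := fun θ => (1 + m) * (1 - m * Real.sin θ ^ 2)
      / ((1 + m * Real.sin θ ^ 2) * Real.sqrt (1 - m ^ 2 * Real.sin θ ^ 2)) with hF'
  have hub : ∀ θ : ℝ, u θ ≤ 1 := by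
    intro θ
    rw [hu]
    simp only
    rw [div_le_one (hden θ)]
    nlinarith [mul_nonneg (sub_nonneg.2 (Real.sin_le_one θ))
      (sub_nonneg.2 (show m * Real.sin θ ≤ 1 by
        nlinarith [Real.sin_le_one θ, Real.neg_one_le_sin θ]))]
  have hlb : ∀ θ : ℝ, -1 ≤ u θ := by
    intro θ
    rw [hu]
    simp only
    rw [le_div_iff₀ (hden θ)]
    nlinarith [mul_nonneg (sub_nonneg.2 (Real.neg_one_le_sin θ))
      (sub_nonneg.2 (show -1 ≤ m * Real.sin θ by
        nlinarith [Real.sin_le_one θ, Real.neg_one_le_sin θ]))]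
  have hucont : Continuous u :=
    (continuous_const.mul Real.continuous_sin).div
      (continuous_const.add (continuous_const.mul (Real.continuous_sin.pow 2)))
      (fun θ => (hden θ).ne')
  have hcontf : ContinuousOn f (Set.uIcc 0 (π/2)) :=
    (Real.continuous_arcsin.comp hucont).continuousOn
  have hcontF' : ContinuousOn F' (Set.uIcc 0 (π/2)) := by
    apply Continuous.continuousOn
    exact (continuous_const.mul
        (continuous_const.sub (continuous_const.mul (Real.continuous_sin.pow 2)))).div
      ((continuous_const.add (continuous_const.mul (Real.continuous_sin.pow 2))).mul
        (contDelta m))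
      (fun θ => mul_ne_zero (hden θ).ne' (sqrt_rad_pos hm2 θ).ne')
  have hf0 : f 0 = 0 := by
    rw [hf, hu]
    simp
  have hfpi : f (π/2) = π/2 := by
    rw [hf, hu]
    simp only [Real.sin_pi_div_two, one_pow, mul_one]
    rw [div_self (by positivity), Real.arcsin_one]
  have hff' : ∀ x ∈ Set.Ioo (min (0:ℝ) (π/2)) (max 0 (π/2)),
      HasDerivWithinAt f (F' x) (Set.Ioi x) x := by
    intro x hx
    rw [min_eq_left hpi.le, max_eq_right hpi.le] at hx
    have hs : 0 < Real.sin x := Real.sin_pos_of_pos_of_lt_pi hx.1 (by linarith [hx.2, Real.pi_pos])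
    have hc : 0 < Real.cos x := Real.cos_pos_of_mem_Ioo ⟨by linarith [hx.1, Real.pi_pos], hx.2⟩
    have hs1 : Real.sin x < 1 := by
      nlinarith [Real.sin_sq_add_cos_sq x, Real.sin_le_one x]
    have hux0 : 0 < u x := div_pos (by positivity) (hden x)
    have hux1 : u x < 1 := by
      rw [hu]
      simp only
      rw [div_lt_one (hden x)]
      nlinarith [mul_pos (sub_pos.2 hs1) (sub_pos.2 (show m * Real.sin x < 1 by nlinarith))]
    have hn' : HasDerivAt (fun t => (1 + m) * Real.sin t) ((1 + m) * Real.cos x) x :=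
      (Real.hasDerivAt_sin x).const_mul (1 + m)
    have hd' : HasDerivAt (fun t => 1 + m * Real.sin t ^ 2)
        (m * (2 * Real.sin x ^ 1 * Real.cos x)) x := by
      simpa using (((Real.hasDerivAt_sin x).pow 2).const_mul m).const_add (1:ℝ)
    have hdu : HasDerivAt u
        (((1 + m) * Real.cos x * (1 + m * Real.sin x ^ 2)
          - (1 + m) * Real.sin x * (m * (2 * Real.sin x ^ 1 * Real.cos x)))
          / (1 + m * Real.sin x ^ 2) ^ 2) x := hn'.div hd' (hden x).ne'
    have harc := (Real.hasDerivAt_arcsin (by linarith : u x ≠ -1) hux1.ne).comp x hdu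
    have hsq : Real.sqrt (1 - u x ^ 2)
        = Real.cos x * Real.sqrt (1 - m ^ 2 * Real.sin x ^ 2) / (1 + m * Real.sin x ^ 2) := by
      have hΔ2 : Real.sqrt (1 - m ^ 2 * Real.sin x ^ 2) ^ 2 = 1 - m ^ 2 * Real.sin x ^ 2 :=
        Real.sq_sqrt (rad_pos hm2 x).le
      have hidm : 1 - u x ^ 2
          = (Real.cos x * Real.sqrt (1 - m ^ 2 * Real.sin x ^ 2) / (1 + m * Real.sin x ^ 2)) ^ 2 := by
        rw [hu]
        simp only
        field_simp
        linear_combination (-Real.cos x ^ 2) * hΔ2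
          - (1 - m ^ 2 * Real.sin x ^ 2) * Real.sin_sq_add_cos_sq x
      rw [hidm, Real.sqrt_sq (div_nonneg (mul_nonneg hc.le (Real.sqrt_nonneg _)) (hden x).le)]
    apply HasDerivAt.hasDerivWithinAt
    refine harc.congr_deriv (Eq.symm ?_)
    simp only [hF']
    rw [hsq, one_div, inv_div, div_mul_div_comm]
    rw [div_eq_div_iff (mul_pos (hden x) (sqrt_rad_pos hm2 x)).ne'
      (mul_pos (mul_pos hc (sqrt_rad_pos hm2 x)) (pow_pos (hden x) 2)).ne']
    ring
  have key := intervalIntegral.integral_comp_mul_deriv'' (a := (0:ℝ)) (b := π/2)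
    hcontf hff' hcontF' (hg.continuousOn)
  rw [hf0, hfpi] at key
  simpa using key

/-- Gauss / Landen for K. -/
lemma gaussK {m k : ℝ} (hm : m ∈ Set.Ioo (0:ℝ) 1) (hk : k ^ 2 * (1 + m) ^ 2 = 4 * m) :
    ellipticK k = (1 + m) * ellipticK m := by
  obtain ⟨hm0, hm1⟩ := hm
  have h1m : (0:ℝ) < 1 + m := by linarith
  have hm2 : m ^ 2 < 1 := by nlinarith
  have hk2 : k ^ 2 < 1 := by nlinarith [sq_nonneg (1 - m)]
  have hk2' : k ^ 2 = 4 * m / (1 + m) ^ 2 := by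
    rw [eq_div_iff (by positivity)]; exact hk
  have hsub := gauss_subst ⟨hm0, hm1⟩ (contInv hk2)
  rw [ellipticK, ← hsub]
  rw [show (1 + m) * ellipticK m
      = ∫ θ in (0:ℝ)..(π/2), (1 + m) * (1 / Real.sqrt (1 - m ^ 2 * Real.sin θ ^ 2)) by
    rw [ellipticK, ← intervalIntegral.integral_const_mul]]
  apply intervalIntegral.integral_congr
  intro θ hθ
  rw [Set.uIcc_of_le (by positivity)] at hθ
  have hden : 0 < 1 + m * Real.sin θ ^ 2 := by nlinarith [sq_nonneg (Real.sin θ)]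
  have hnum : 0 < 1 - m * Real.sin θ ^ 2 := by nlinarith [Real.sin_sq_le_one θ]
  have hub : (1 + m) * Real.sin θ / (1 + m * Real.sin θ ^ 2) ≤ 1 := by
    rw [div_le_one hden]
    nlinarith [mul_nonneg (sub_nonneg.2 (Real.sin_le_one θ))
      (sub_nonneg.2 (show m * Real.sin θ ≤ 1 by
        nlinarith [Real.sin_le_one θ, Real.neg_one_le_sin θ]))]
  have hlb : -1 ≤ (1 + m) * Real.sin θ / (1 + m * Real.sin θ ^ 2) := by
    rw [le_div_iff₀ hden]
    nlinarith [mul_nonneg (sub_nonneg.2 (Real.neg_one_le_sin θ))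
      (sub_nonneg.2 (show -1 ≤ m * Real.sin θ by
        nlinarith [Real.sin_le_one θ, Real.neg_one_le_sin θ]))]
  have harc : Real.sin (Real.arcsin ((1 + m) * Real.sin θ / (1 + m * Real.sin θ ^ 2)))
      = (1 + m) * Real.sin θ / (1 + m * Real.sin θ ^ 2) := Real.sin_arcsin hlb hub
  have hval : 1 - k ^ 2 * ((1 + m) * Real.sin θ / (1 + m * Real.sin θ ^ 2)) ^ 2
      = ((1 - m * Real.sin θ ^ 2) / (1 + m * Real.sin θ ^ 2)) ^ 2 := by
    rw [hk2']
    field_simp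
    ring
  dsimp only
  rw [harc, hval, Real.sqrt_sq (div_nonneg hnum.le hden.le)]
  rw [one_div_div, div_mul_div_comm, mul_one_div]
  rw [div_eq_div_iff (mul_pos hnum (mul_pos hden (sqrt_rad_pos hm2 θ))).ne'
    (sqrt_rad_pos hm2 θ).ne']
  ring

/-- Gauss / Landen for E. -/
lemma gaussE {m k : ℝ} (hm : m ∈ Set.Ioo (0:ℝ) 1) (hk : k ^ 2 * (1 + m) ^ 2 = 4 * m) :
    ellipticE k = (2 * ellipticE m - (1 - m ^ 2) * ellipticK m) / (1 + m) := by
  obtain ⟨hm0, hm1⟩ := hm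
  have h1m : (0:ℝ) < 1 + m := by linarith
  have hm2 : m ^ 2 < 1 := by nlinarith
  have hk2 : k ^ 2 < 1 := by nlinarith [sq_nonneg (1 - m)]
  have hk2' : k ^ 2 = 4 * m / (1 + m) ^ 2 := by rw [eq_div_iff (by positivity)]; exact hk
  have hrad := rad_pos hm2
  have hs0 := sqrt_rad_pos hm2
  have hden : ∀ θ : ℝ, 0 < 1 + m * Real.sin θ ^ 2 := fun θ => by
    nlinarith [sq_nonneg (Real.sin θ)]
  have hnum : ∀ θ : ℝ, 0 < 1 - m * Real.sin θ ^ 2 := fun θ => by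
    nlinarith [Real.sin_sq_le_one θ]
  set W : ℝ → ℝ := fun θ => (1 + m) * (1 - m * Real.sin θ ^ 2) ^ 2
      / ((1 + m * Real.sin θ ^ 2) ^ 2 * Real.sqrt (1 - m ^ 2 * Real.sin θ ^ 2)) with hW
  -- Step 1: substitution
  have hstep1 : ellipticE k = ∫ θ in (0:ℝ)..(π/2), W θ := by
    have hsub := gauss_subst ⟨hm0, hm1⟩
      (g := fun φ => Real.sqrt (1 - k ^ 2 * Real.sin φ ^ 2)) (contDelta k)
    rw [ellipticE, ← hsub]
    apply intervalIntegral.integral_congr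
    intro θ hθ
    dsimp only
    have hub : (1 + m) * Real.sin θ / (1 + m * Real.sin θ ^ 2) ≤ 1 := by
      rw [div_le_one (hden θ)]
      nlinarith [mul_nonneg (sub_nonneg.2 (Real.sin_le_one θ))
        (sub_nonneg.2 (show m * Real.sin θ ≤ 1 by
          nlinarith [Real.sin_le_one θ, Real.neg_one_le_sin θ]))]
    have hlb : -1 ≤ (1 + m) * Real.sin θ / (1 + m * Real.sin θ ^ 2) := by
      rw [le_div_iff₀ (hden θ)]
      nlinarith [mul_nonneg (sub_nonneg.2 (Real.neg_one_le_sin θ))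
        (sub_nonneg.2 (show -1 ≤ m * Real.sin θ by
          nlinarith [Real.sin_le_one θ, Real.neg_one_le_sin θ]))]
    have harc : Real.sin (Real.arcsin ((1 + m) * Real.sin θ / (1 + m * Real.sin θ ^ 2)))
        = (1 + m) * Real.sin θ / (1 + m * Real.sin θ ^ 2) := Real.sin_arcsin hlb hub
    have hval : 1 - k ^ 2 * ((1 + m) * Real.sin θ / (1 + m * Real.sin θ ^ 2)) ^ 2
        = ((1 - m * Real.sin θ ^ 2) / (1 + m * Real.sin θ ^ 2)) ^ 2 := by
      rw [hk2']
      field_simp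
      ring
    rw [harc, hval, Real.sqrt_sq (div_nonneg (hnum θ).le (hden θ).le)]
    rw [div_mul_div_comm]
    rw [div_eq_div_iff (mul_pos (hden θ) (mul_pos (hden θ) (hs0 θ))).ne'
      (mul_pos (pow_pos (hden θ) 2) (hs0 θ)).ne']
    ring
  -- Step 2: the antiderivative for the transformed integrand
  set F2 : ℝ → ℝ := fun t => 2 * m * (Real.sin t * Real.cos t * Real.sqrt (1 - m ^ 2 * Real.sin t ^ 2))
      / (1 + m * Real.sin t ^ 2) with hF2
  set Hf : ℝ → ℝ := fun θ => (1 + m) ^ 2 * (1 - m * Real.sin θ ^ 2) ^ 2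
      / ((1 + m * Real.sin θ ^ 2) ^ 2 * Real.sqrt (1 - m ^ 2 * Real.sin θ ^ 2))
      - 2 * Real.sqrt (1 - m ^ 2 * Real.sin θ ^ 2)
      + (1 - m ^ 2) * (1 / Real.sqrt (1 - m ^ 2 * Real.sin θ ^ 2)) with hHf
  have hasF2 : ∀ θ : ℝ, HasDerivAt F2 (Hf θ) θ := by
    intro θ
    have hA : HasDerivAt (fun t => Real.sin t * Real.cos t)
        (Real.cos θ * Real.cos θ + Real.sin θ * -Real.sin θ) θ :=
      (Real.hasDerivAt_sin θ).mul (Real.hasDerivAt_cos θ)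
    have hB : HasDerivAt (fun t => 1 - m ^ 2 * Real.sin t ^ 2)
        (-(m ^ 2 * (2 * Real.sin θ ^ 1 * Real.cos θ))) θ := by
      simpa using (((Real.hasDerivAt_sin θ).pow 2).const_mul (m ^ 2)).const_sub (1:ℝ)
    have hC : HasDerivAt (fun t => Real.sqrt (1 - m ^ 2 * Real.sin t ^ 2))
        (-(m ^ 2 * (2 * Real.sin θ ^ 1 * Real.cos θ)) / (2 * Real.sqrt (1 - m ^ 2 * Real.sin θ ^ 2))) θ :=
      hB.sqrt (hrad θ).ne'
    have hD := hA.mul hC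
    have hE := hD.const_mul (2 * m)
    have hden' : HasDerivAt (fun t => 1 + m * Real.sin t ^ 2)
        (m * (2 * Real.sin θ ^ 1 * Real.cos θ)) θ := by
      simpa using (((Real.hasDerivAt_sin θ).pow 2).const_mul m).const_add (1:ℝ)
    have hQ := hE.div hden' (hden θ).ne'
    refine hQ.congr_deriv (Eq.symm ?_)
    have hd : Real.sqrt (1 - m ^ 2 * Real.sin θ ^ 2) ^ 2 = 1 - m ^ 2 * Real.sin θ ^ 2 :=
      Real.sq_sqrt (hrad θ).le
    have hp : Real.sin θ ^ 2 + Real.cos θ ^ 2 = 1 := Real.sin_sq_add_cos_sq θ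
    rw [hHf]
    simp only [Pi.mul_apply]
    field_simp [(hs0 θ).ne', (hden θ).ne']
    linear_combination (-2 * (1 + m * Real.sin θ ^ 2) ^ 2 + 2 * m * Real.sin θ ^ 2 * (1 + m * Real.sin θ ^ 2) + (-2 * m * (1 + m * Real.sin θ ^ 2) + 4 * m ^ 2 * Real.sin θ ^ 2) * Real.cos θ ^ 2) * hd + (2 * m ^ 3 * Real.sin θ ^ 2 * (1 + m * Real.sin θ ^ 2) + (-2 * m * (1 + m * Real.sin θ ^ 2) + 4 * m ^ 2 * Real.sin θ ^ 2) * (1 - m ^ 2 * Real.sin θ ^ 2)) * hp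
  have hcontW : Continuous W := by
    apply Continuous.div
    · exact continuous_const.mul ((continuous_const.sub
        (continuous_const.mul (Real.continuous_sin.pow 2))).pow 2)
    · exact (((continuous_const.add (continuous_const.mul (Real.continuous_sin.pow 2))).pow 2).mul
        (contDelta m))
    · exact fun θ => mul_ne_zero (pow_ne_zero 2 (hden θ).ne') (hs0 θ).ne'
  have hcontHf : Continuous Hf := by
    apply Continuous.add
    · apply Continuous.sub
      · apply Continuous.div
        · exact continuous_const.mul ((continuous_const.sub
            (continuous_const.mul (Real.continuous_sin.pow 2))).pow 2)
        · exact (((continuous_const.add (continuous_const.mul (Real.continuous_sin.pow 2))).pow 2).mul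
            (contDelta m))
        · exact fun θ => mul_ne_zero (pow_ne_zero 2 (hden θ).ne') (hs0 θ).ne'
      · exact continuous_const.mul (contDelta m)
    · exact continuous_const.mul (contInv hm2)
  have hftc2 : ∫ θ in (0:ℝ)..(π/2), Hf θ = 0 := by
    rw [intervalIntegral.integral_eq_sub_of_hasDerivAt (fun θ _ => hasF2 θ)
      (hcontHf.intervalIntegrable _ _)]
    rw [hF2]
    simp
  have hWco : ∀ θ : ℝ, W θ = (1 / (1 + m)) * Hf θ
      + (1 / (1 + m)) * (2 * Real.sqrt (1 - m ^ 2 * Real.sin θ ^ 2)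
        - (1 - m ^ 2) * (1 / Real.sqrt (1 - m ^ 2 * Real.sin θ ^ 2))) := by
    intro θ
    have key : (1 + m) * W θ = Hf θ + (2 * Real.sqrt (1 - m ^ 2 * Real.sin θ ^ 2)
        - (1 - m ^ 2) * (1 / Real.sqrt (1 - m ^ 2 * Real.sin θ ^ 2))) := by
      rw [hW, hHf]
      simp only
      ring
    rw [← mul_add, ← key, ← mul_assoc, one_div_mul_cancel h1m.ne', one_mul]
  have hint4 : ∫ θ in (0:ℝ)..(π/2), (2 * Real.sqrt (1 - m ^ 2 * Real.sin θ ^ 2)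
      - (1 - m ^ 2) * (1 / Real.sqrt (1 - m ^ 2 * Real.sin θ ^ 2)))
      = 2 * ellipticE m - (1 - m ^ 2) * ellipticK m := by
    rw [intervalIntegral.integral_sub (f := fun θ => 2 * Real.sqrt (1 - m ^ 2 * Real.sin θ ^ 2)) (g := fun θ => (1 - m ^ 2) * (1 / Real.sqrt (1 - m ^ 2 * Real.sin θ ^ 2))) ((continuous_const.mul (contDelta m)).intervalIntegrable _ _)
      ((continuous_const.mul (contInv hm2)).intervalIntegrable _ _),
      intervalIntegral.integral_const_mul, intervalIntegral.integral_const_mul]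
    rfl
  have hint5 : ∫ θ in (0:ℝ)..(π/2), W θ
      = (1 / (1 + m)) * (∫ θ in (0:ℝ)..(π/2), Hf θ)
        + (1 / (1 + m)) * (2 * ellipticE m - (1 - m ^ 2) * ellipticK m) := by
    rw [← hint4, ← intervalIntegral.integral_const_mul, ← intervalIntegral.integral_const_mul,
      ← intervalIntegral.integral_add]
    · exact intervalIntegral.integral_congr (fun θ _ => hWco θ)
    · exact (continuous_const.mul hcontHf).intervalIntegrable _ _
    · apply Continuous.intervalIntegrable
      exact continuous_const.mul ((continuous_const.mul (contDelta m)).sub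
        (continuous_const.mul (contInv hm2)))
  rw [hstep1, hint5, hftc2]
  field_simp
  ring

end EllAux

theorem elliptic_E_bounds (k : ℝ) (hk : k ∈ Set.Ioo (0:ℝ) 1) :
    Real.sqrt (1 - k ^ 2) * ellipticK k < ellipticE k ∧
      ellipticE k < ((1 + Real.sqrt (1 - k ^ 2)) / 2) ^ 2 * ellipticK k := by
  obtain ⟨hk0, hk1⟩ := hk
  have hk2 : k ^ 2 < 1 := by nlinarith
  set q := Real.sqrt (1 - k ^ 2) with hq
  have hq0 : 0 < q := Real.sqrt_pos.mpr (by nlinarith)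
  have hq2 : q ^ 2 = 1 - k ^ 2 := Real.sq_sqrt (by nlinarith)
  have hq1 : q < 1 := by
    nlinarith [hq2, sq_nonneg (1 - q)]
  set m := (1 - q) / (1 + q) with hmdef
  have h1q : (0:ℝ) < 1 + q := by linarith
  have hm0 : 0 < m := div_pos (by linarith) h1q
  have hm1 : m < 1 := by
    rw [div_lt_one h1q]; linarith
  have hmIoo : m ∈ Set.Ioo (0:ℝ) 1 := ⟨hm0, hm1⟩
  have h1m : (0:ℝ) < 1 + m := by linarith
  have hkm : k ^ 2 * (1 + m) ^ 2 = 4 * m := by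
    rw [hmdef]
    field_simp
    nlinarith [hq2]
  have hKm : 0 < ellipticK m := EllAux.K_pos (by nlinarith)
  have hGK : ellipticK k = (1 + m) * ellipticK m := EllAux.gaussK hmIoo hkm
  have hGE : ellipticE k = (2 * ellipticE m - (1 - m ^ 2) * ellipticK m) / (1 + m) :=
    EllAux.gaussE hmIoo hkm
  constructor
  · exact EllAux.lower ⟨hk0, hk1⟩
  · have hB : ellipticE m < (1 - m ^ 2 / 2) * ellipticK m := EllAux.Elt hmIoo
    have h2 : ellipticE k < ellipticK m / (1 + m) := by
      rw [hGE, div_lt_div_iff₀ h1m h1m]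
      nlinarith
    have h3 : ((1 + q) / 2) ^ 2 * ellipticK k = ellipticK m / (1 + m) := by
      rw [hGK]
      have h4 : (1 + m) = 2 / (1 + q) := by
        rw [hmdef]; field_simp; norm_num
      rw [h4]
      field_simp
    rw [h3]
    exact h2
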